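/- Let A = I − C be an M-matrix with C ≥ 0, ρ(C) ≤ 1, with triplet representation (−offdiag(A), u, v). Define W₀ = A − I, Z₀ = 2(A + I), and the Cyclic Reduction recursion W_{ℓ+1} = −W_ℓ Z_ℓ^{-1} W_ℓ, Z_{ℓ+1} = Z_ℓ + 2W_{ℓ+1}. Define p₀ = 4v, p_{ℓ+1} = p_ℓ − 2W_ℓ Z_ℓ^{-1} p_ℓ, and v_ℓ = p_ℓ − 2W_ℓ u. Then for all ℓ ≥ 0 (assuming Z_ℓ invertible at each step): p_ℓ ≥ 0, v_ℓ ≥ 0, and Z_ℓ u = v_ℓ, so (−offdiag(Z_ℓ), u, v_ℓ) is a triplet representation of Z_ℓ. -/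

import Mathlib

open Matrix

noncomputable def toC {n : ℕ} (A : Matrix (Fin n) (Fin n) ℝ) : Matrix (Fin n) (Fin n) ℂ :=
  A.map (fun x => (x : ℂ))

def IsEig {n : ℕ} (A : Matrix (Fin n) (Fin n) ℂ) (μ : ℂ) : Prop :=
  ∃ v : Fin n → ℂ, v ≠ 0 ∧ A *ᵥ v = μ • v

noncomputable def specRad {n : ℕ} (B : Matrix (Fin n) (Fin n) ℝ) : ℝ :=
  sSup {r : ℝ | ∃ μ : ℂ, IsEig (toC B) μ ∧ r = ‖μ‖}

def IsMmat {n : ℕ} (A : Matrix (Fin n) (Fin n) ℝ) : Prop :=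
  ∃ (α : ℝ) (B : Matrix (Fin n) (Fin n) ℝ),
    (∀ i j, 0 ≤ B i j) ∧ specRad B ≤ α ∧ A = α • (1 : Matrix (Fin n) (Fin n) ℝ) - B

/-- Triplet representation of the Cyclic Reduction iterates: with W₀ = A - I,
Z₀ = 2(A+I), W_{ℓ+1} = -W_ℓ Z_ℓ⁻¹ W_ℓ, Z_{ℓ+1} = Z_ℓ + 2W_{ℓ+1}, p₀ = 4v,
p_{ℓ+1} = p_ℓ - 2 W_ℓ Z_ℓ⁻¹ p_ℓ and v_ℓ = p_ℓ - 2 W_ℓ u, one has p_ℓ ≥ 0, v_ℓ ≥ 0 and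
Z_ℓ u = v_ℓ, i.e. (-offdiag Z_ℓ, u, v_ℓ) is a triplet representation of Z_ℓ. -/
theorem stmt11 {n : ℕ} (A C : Matrix (Fin n) (Fin n) ℝ) (hA : IsMmat A)
    (hAC : A = 1 - C) (hCnn : ∀ i j, 0 ≤ C i j) (hρ : specRad C ≤ 1)
    (u v : Fin n → ℝ) (hu : ∀ i, 0 < u i) (hv : ∀ i, 0 ≤ v i) (hAu : A *ᵥ u = v)
    (W Z : ℕ → Matrix (Fin n) (Fin n) ℝ) (p : ℕ → Fin n → ℝ)
    (hW0 : W 0 = A - 1) (hZ0 : Z 0 = (2 : ℝ) • (A + 1))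
    (hWrec : ∀ ℓ, W (ℓ+1) = -(W ℓ * (Z ℓ)⁻¹ * W ℓ))
    (hZrec : ∀ ℓ, Z (ℓ+1) = Z ℓ + (2 : ℝ) • W (ℓ+1))
    (hp0 : p 0 = (4 : ℝ) • v)
    (hprec : ∀ ℓ, p (ℓ+1) = p ℓ - (2 : ℝ) • (W ℓ *ᵥ ((Z ℓ)⁻¹ *ᵥ p ℓ)))
    (hZinv : ∀ ℓ, IsUnit (Z ℓ))
    (hWneg : ∀ ℓ i j, W ℓ i j ≤ 0)
    (hZinvnn : ∀ ℓ i j, 0 ≤ (Z ℓ)⁻¹ i j) :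
    ∀ ℓ, (∀ i, 0 ≤ p ℓ i) ∧
      (∀ i, 0 ≤ (p ℓ - (2 : ℝ) • (W ℓ *ᵥ u)) i) ∧
      Z ℓ *ᵥ u = p ℓ - (2 : ℝ) • (W ℓ *ᵥ u) := by
  have hZdet : ∀ ℓ, IsUnit (Z ℓ).det := fun ℓ => (Matrix.isUnit_iff_isUnit_det _).mp (hZinv ℓ)
  -- key sign fact: W ℓ *ᵥ (Z ℓ)⁻¹ *ᵥ x ≤ 0 for x ≥ 0
  have key : ∀ ℓ (x : Fin n → ℝ), (∀ i, 0 ≤ x i) → ∀ i, (W ℓ *ᵥ ((Z ℓ)⁻¹ *ᵥ x)) i ≤ 0 := by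
    intro ℓ x hx i
    have h1 : ∀ j, 0 ≤ ((Z ℓ)⁻¹ *ᵥ x) j := by
      intro j
      simp only [Matrix.mulVec, dotProduct]
      exact Finset.sum_nonneg fun k _ => mul_nonneg (hZinvnn ℓ j k) (hx k)
    simp only [Matrix.mulVec, dotProduct]
    exact Finset.sum_nonpos fun j _ => mul_nonpos_of_nonpos_of_nonneg (hWneg ℓ i j) (h1 j)
  have hWu : ∀ ℓ i, (W ℓ *ᵥ u) i ≤ 0 := by
    intro ℓ i
    simp only [Matrix.mulVec, dotProduct]
    exact Finset.sum_nonpos fun j _ => mul_nonpos_of_nonpos_of_nonneg (hWneg ℓ i j) (hu j).le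
  intro ℓ
  induction ℓ with
  | zero =>
    have hz : Z 0 *ᵥ u = p 0 - (2 : ℝ) • (W 0 *ᵥ u) := by
      rw [hZ0, hW0, hp0, Matrix.smul_mulVec, Matrix.add_mulVec, Matrix.sub_mulVec,
        Matrix.one_mulVec, hAu]
      funext i
      simp only [Pi.smul_apply, Pi.add_apply, Pi.sub_apply, smul_eq_mul]
      ring
    refine ⟨fun i => by simp only [hp0, Pi.smul_apply, smul_eq_mul]; linarith [hv i], fun i => ?_, hz⟩
    rw [← hz, hZ0, Matrix.smul_mulVec, Matrix.add_mulVec, Matrix.one_mulVec, hAu]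
    simp only [Pi.smul_apply, Pi.add_apply, smul_eq_mul]
    nlinarith [hv i, (hu i).le]
  | succ ℓ IH =>
    obtain ⟨hp, hvℓ, hZu⟩ := IH
    -- M := W ℓ * (Z ℓ)⁻¹
    have hinv : (Z ℓ)⁻¹ *ᵥ (Z ℓ *ᵥ u) = u := by
      rw [Matrix.mulVec_mulVec, Matrix.nonsing_inv_mul _ (hZdet ℓ), Matrix.one_mulVec]
    -- W ℓ *ᵥ (Z ℓ)⁻¹ *ᵥ (p ℓ - 2 • (ated)) = W ℓ *ᵥ u
    have hMv : W ℓ *ᵥ ((Z ℓ)⁻¹ *ᵥ (p ℓ - (2 : ℝ) • (W ℓ *ᵥ u))) = W ℓ *ᵥ u := by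
      rw [← hZu, hinv]
    have hMv' : ∀ i, (W ℓ *ᵥ ((Z ℓ)⁻¹ *ᵥ p ℓ)) i
        - 2 * (W ℓ *ᵥ ((Z ℓ)⁻¹ *ᵥ (W ℓ *ᵥ u))) i = (W ℓ *ᵥ u) i := by
      intro i
      have := congrFun hMv i
      rw [Matrix.mulVec_sub, Matrix.mulVec_smul, Matrix.mulVec_sub, Matrix.mulVec_smul] at this
      simpa [Pi.sub_apply, Pi.smul_apply, smul_eq_mul] using this
    have hkp : ∀ i, (W ℓ *ᵥ ((Z ℓ)⁻¹ *ᵥ p ℓ)) i ≤ 0 := key ℓ (p ℓ) hp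
    -- pointwise expressions for the new iterates
    have hpnew : ∀ i, p (ℓ+1) i = p ℓ i - 2 * (W ℓ *ᵥ ((Z ℓ)⁻¹ *ᵥ p ℓ)) i := by
      intro i; rw [hprec ℓ]; simp [Pi.sub_apply, Pi.smul_apply, smul_eq_mul]
    have hWnew : ∀ i, (W (ℓ+1) *ᵥ u) i = -(W ℓ *ᵥ ((Z ℓ)⁻¹ *ᵥ (W ℓ *ᵥ u))) i := by
      intro i
      rw [hWrec ℓ, Matrix.neg_mulVec, Matrix.mul_assoc, ← Matrix.mulVec_mulVec,
        ← Matrix.mulVec_mulVec]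
      rfl
    refine ⟨fun i => by rw [hpnew i]; linarith [hp i, hkp i], fun i => ?_, ?_⟩
    · simp only [Pi.sub_apply, Pi.smul_apply, smul_eq_mul]
      rw [hpnew i, hWnew i]
      have := hMv' i
      have := hkp i
      have := hWu ℓ i
      have := hp i
      linarith
    · funext i
      have h1 : (Z (ℓ+1) *ᵥ u) i = (Z ℓ *ᵥ u) i + 2 * (W (ℓ+1) *ᵥ u) i := by
        rw [hZrec ℓ, Matrix.add_mulVec, Matrix.smul_mulVec]
        simp [Pi.add_apply, Pi.smul_apply, smul_eq_mul]
      have h2 : (Z ℓ *ᵥ u) i = p ℓ i - 2 * (W ℓ *ᵥ u) i := by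
        rw [hZu]; simp [Pi.sub_apply, Pi.smul_apply, smul_eq_mul]
      simp only [Pi.sub_apply, Pi.smul_apply, smul_eq_mul]
      rw [h1, h2, hpnew i, hWnew i]
      have := hMv' i
      linarith
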